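/- Let a, w ∈ ℂ and define u, v ∈ ℝ³ by u := (Re((1 − a²)w), Re(√(−1)(1 + a²)w), Re(2aw)) and v := (Im((1 − a²)w), Im(√(−1)(1 + a²)w), Im(2aw)). Then ⟨u, v⟩ = 0 and ‖u‖ = ‖v‖ = |w|(1 + |a|²). -/

import Mathlib

open scoped RealInnerProductSpace

/-- The vector `(x, y, z)` in Euclidean 3-space. -/
noncomputable def e3 (x y z : ℝ) : EuclideanSpace ℝ (Fin 3) :=
  (WithLp.equiv 2 _).symm ![x, y, z]

/-- The cross product in Euclidean 3-space. -/
noncomputable def cross3 (a b : EuclideanSpace ℝ (Fin 3)) : EuclideanSpace ℝ (Fin 3) :=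
  e3 (a 1 * b 2 - a 2 * b 1) (a 2 * b 0 - a 0 * b 2) (a 0 * b 1 - a 1 * b 0)

/-- Inverse stereographic projection `n(z) = (1 + |z|²)⁻¹ (2 Re z, 2 Im z, |z|² - 1)`. -/
noncomputable def invStereo (z : ℂ) : EuclideanSpace ℝ (Fin 3) :=
  (1 + ‖z‖ ^ 2)⁻¹ • e3 (2 * z.re) (2 * z.im) (‖z‖ ^ 2 - 1)

/-- The Weierstrass edge vector `W = (gⱼ - gᵢ)⁻¹ • (1 - gᵢgⱼ, √(-1)(1 + gᵢgⱼ), gᵢ + gⱼ) ∈ ℂ³`. -/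
noncomputable def wVec (gi gj : ℂ) : Fin 3 → ℂ :=
  (gj - gi)⁻¹ • ![1 - gi * gj, Complex.I * (1 + gi * gj), gi + gj]

/-- Componentwise imaginary part of a vector in ℂ³, as a vector in ℝ³. -/
noncomputable def imVec (W : Fin 3 → ℂ) : EuclideanSpace ℝ (Fin 3) :=
  e3 (W 0).im (W 1).im (W 2).im

/-- Componentwise real part of a vector in ℂ³, as a vector in ℝ³. -/
noncomputable def reVec (W : Fin 3 → ℂ) : EuclideanSpace ℝ (Fin 3) :=
  e3 (W 0).re (W 1).re (W 2).re


/-- Pointwise conformality in the classical Weierstrass representation: the real and imaginary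
parts of `((1 − a²)w, √(−1)(1 + a²)w, 2aw)` are orthogonal vectors in ℝ³ of equal length
`|w|(1 + |a|²)`. -/
theorem stmt_15 (a w : ℂ) (u v : EuclideanSpace ℝ (Fin 3))
    (hu : u = e3 (((1 - a ^ 2) * w).re) ((Complex.I * (1 + a ^ 2) * w).re) ((2 * a * w).re))
    (hv : v = e3 (((1 - a ^ 2) * w).im) ((Complex.I * (1 + a ^ 2) * w).im) ((2 * a * w).im)) :
    ⟪u, v⟫ = 0 ∧ ‖u‖ = ‖w‖ * (1 + ‖a‖ ^ 2) ∧
      ‖v‖ = ‖w‖ * (1 + ‖a‖ ^ 2) := by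
  subst hu hv
  have hA : ‖a‖ ^ 2 = a.re ^ 2 + a.im ^ 2 := by
    rw [← Complex.normSq_eq_norm_sq]; simp [Complex.normSq_apply]; ring
  have hW : ‖w‖ ^ 2 = w.re ^ 2 + w.im ^ 2 := by
    rw [← Complex.normSq_eq_norm_sq]; simp [Complex.normSq_apply]; ring
  have key : ∀ X : ℝ, 0 ≤ X → X ^ 2 = (‖w‖ * (1 + ‖a‖ ^ 2)) ^ 2 →
      X = ‖w‖ * (1 + ‖a‖ ^ 2) := by
    intro X hX h
    have : 0 ≤ ‖w‖ * (1 + ‖a‖ ^ 2) := by positivity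
    nlinarith
  refine ⟨?_, ?_, ?_⟩
  · simp only [e3, PiLp.inner_apply, Fin.sum_univ_three, WithLp.equiv_symm_apply, PiLp.toLp_apply,
      Matrix.cons_val_zero, Matrix.cons_val_one, Matrix.head_cons, Matrix.cons_val_two,
      Matrix.tail_cons, RCLike.inner_apply, conj_trivial]
    simp [Complex.mul_re, Complex.mul_im, Complex.sub_re, Complex.sub_im, Complex.add_re,
      Complex.add_im, Complex.one_re, Complex.one_im, Complex.I_re, Complex.I_im, pow_two]
    ring
  · apply key _ (norm_nonneg _)
    rw [← real_inner_self_eq_norm_sq]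
    simp only [e3, PiLp.inner_apply, Fin.sum_univ_three, WithLp.equiv_symm_apply, PiLp.toLp_apply,
      Matrix.cons_val_zero, Matrix.cons_val_one, Matrix.head_cons, Matrix.cons_val_two,
      Matrix.tail_cons, RCLike.inner_apply, conj_trivial]
    simp only [Complex.mul_re, Complex.mul_im, Complex.sub_re, Complex.sub_im, Complex.add_re,
      Complex.add_im, Complex.one_re, Complex.one_im, Complex.I_re, Complex.I_im, pow_two]
    norm_num
    linear_combination (-(1 + ‖a‖ ^ 2) ^ 2) * hW + (-(w.re ^ 2 + w.im ^ 2) * (2 + ‖a‖ ^ 2 + a.re ^ 2 + a.im ^ 2)) * hA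
  · apply key _ (norm_nonneg _)
    rw [← real_inner_self_eq_norm_sq]
    simp only [e3, PiLp.inner_apply, Fin.sum_univ_three, WithLp.equiv_symm_apply, PiLp.toLp_apply,
      Matrix.cons_val_zero, Matrix.cons_val_one, Matrix.head_cons, Matrix.cons_val_two,
      Matrix.tail_cons, RCLike.inner_apply, conj_trivial]
    simp only [Complex.mul_re, Complex.mul_im, Complex.sub_re, Complex.sub_im, Complex.add_re,
      Complex.add_im, Complex.one_re, Complex.one_im, Complex.I_re, Complex.I_im, pow_two]
    norm_num
    linear_combination (-(1 + ‖a‖ ^ 2) ^ 2) * hW + (-(w.re ^ 2 + w.im ^ 2) * (2 + ‖a‖ ^ 2 + a.re ^ 2 + a.im ^ 2)) * hA
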